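/- Let R be a commutative ring, π ∈ R, and let a ≤ b, a' ≤ b' be integers with a' ≥ a and b' ≥ b. Then every π-[a,b]-pseudo-coherent cochain complex of R-modules is also π-[a',b']-pseudo-coherent. -/

import Mathlib

open CategoryTheory

section PseudoCoherence

variable {R : Type*} [CommRing R]

/-- A linear map (in `ModuleCat R`) is a `π`-isomorphism if its kernel and cokernel are
annihilated by `π`. -/
def IsPiIsomorphism (π : R) {M N : ModuleCat R} (f : M ⟶ N) : Prop :=
  (∀ x : M, f x = 0 → π • x = 0) ∧ (∀ y : N, ∃ x : M, π • y = f x)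

/-- A linear map (in `ModuleCat R`) is `π`-surjective if its cokernel is annihilated by `π`. -/
def IsPiSurjective (π : R) {M N : ModuleCat R} (f : M ⟶ N) : Prop :=
  ∀ y : N, ∃ x : M, π • y = f x

/-- A morphism of cochain complexes of `R`-modules `f : P^• ⟶ M^•` is a `π`-`[a,b]`-pseudo
resolution if `P^•` is a complex of finite free `R`-modules vanishing outside `[a,b]`, and
`H^i(f)` is a `π`-isomorphism for `i > a` and `π`-surjective for `i = a`. -/
def IsPiPseudoResolution (π : R) (a b : ℤ) {P M : CochainComplex (ModuleCat R) ℤ}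
    (f : P ⟶ M) : Prop :=
  (∀ i : ℤ, Module.Free R (P.X i)) ∧ (∀ i : ℤ, Module.Finite R (P.X i)) ∧
  (∀ i : ℤ, i < a ∨ b < i → ∀ x : P.X i, x = 0) ∧
  (∀ i : ℤ, a < i → IsPiIsomorphism π (HomologicalComplex.homologyMap f i)) ∧
  IsPiSurjective π (HomologicalComplex.homologyMap f a)

/-- A cochain complex of `R`-modules is `π`-`[a,b]`-pseudo-coherent if it vanishes in degrees
`> b` and admits a `π`-`[a,b]`-pseudo resolution. -/
def IsPiPseudoCoherent (π : R) (a b : ℤ) (M : CochainComplex (ModuleCat R) ℤ) : Prop :=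
  (∀ i : ℤ, b < i → ∀ x : M.X i, x = 0) ∧
  ∃ (P : CochainComplex (ModuleCat R) ℤ) (f : P ⟶ M), IsPiPseudoResolution π a b f


section Trunc
variable {R : Type*} [CommRing R]

/-- The degreewise submodule defining the brutal truncation `σ≥a'`. -/
def truncSub (a' : ℤ) (P : CochainComplex (ModuleCat R) ℤ) (i : ℤ) : Submodule R (P.X i) :=
  if a' ≤ i then ⊤ else ⊥

lemma truncSub_mapsTo (a' : ℤ) (P : CochainComplex (ModuleCat R) ℤ) (i j : ℤ) :
    ∀ x ∈ truncSub a' P i, P.d i j x ∈ truncSub a' P j := by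
  intro x hx
  by_cases hj : a' ≤ j
  · simp [truncSub, if_pos hj]
  · by_cases hij : i + 1 = j
    · have hi : ¬ a' ≤ i := by omega
      have hx0 : x = 0 := by simpa [truncSub, if_neg hi] using hx
      simp [hx0]
    · have : P.d i j = 0 := P.shape i j (by simpa using hij)
      rw [this]
      exact Submodule.zero_mem _

/-- Brutal truncation of a cochain complex in degrees `≥ a'`. -/
def trunc (a' : ℤ) (P : CochainComplex (ModuleCat R) ℤ) : CochainComplex (ModuleCat R) ℤ where
  X i := ModuleCat.of R (truncSub a' P i)
  d i j := ModuleCat.ofHom (LinearMap.restrict (P.d i j).hom (truncSub_mapsTo a' P i j))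
  shape i j h := by
    ext x
    show P.d i j x.1 = (0 : P.X i ⟶ P.X j) x.1
    rw [P.shape i j h]
  d_comp_d' i j k _ _ := by
    ext x
    show (P.d i j ≫ P.d j k) x.1 = (0 : P.X i ⟶ P.X k) x.1
    exact congrArg (fun (g : P.X i ⟶ P.X k) => g x.1) (P.d_comp_d i j k)

/-- The inclusion of the brutal truncation. -/
def truncι (a' : ℤ) (P : CochainComplex (ModuleCat R) ℤ) : trunc a' P ⟶ P where
  f i := ModuleCat.ofHom (truncSub a' P i).subtype
  comm' i j _ := rfl

lemma truncι_isIso (a' : ℤ) (P : CochainComplex (ModuleCat R) ℤ) {j : ℤ} (hj : a' ≤ j) :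
    IsIso ((truncι a' P).f j) := by
  have hbij : Function.Bijective ((truncSub a' P j).subtype) :=
    ⟨Subtype.val_injective, fun y => ⟨⟨y, by simp [truncSub, if_pos hj]⟩, rfl⟩⟩
  exact (LinearEquiv.ofBijective _ hbij).toModuleIso.isIso_hom



lemma truncι_homologyMap_isIso (a' : ℤ) (P : CochainComplex (ModuleCat R) ℤ) {i : ℤ}
    (hi : a' < i) : IsIso (HomologicalComplex.homologyMap (truncι a' P) i) := by
  have e1 := truncι_isIso a' P (j := (ComplexShape.up ℤ).prev i)
      (by rw [CochainComplex.prev]; omega)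
  have e2 := truncι_isIso a' P (j := i) hi.le
  have e3 := truncι_isIso a' P (j := (ComplexShape.up ℤ).next i)
      (by rw [CochainComplex.next]; omega)
  exact ShortComplex.isIso_homologyMap_of_epi_of_isIso_of_mono'
    ((HomologicalComplex.shortComplexFunctor (ModuleCat R) (ComplexShape.up ℤ) i).map
      (truncι a' P))
    (by haveI := e1; exact (inferInstance : Epi ((truncι a' P).f ((ComplexShape.up ℤ).prev i))))
    (by exact e2)
    (by haveI := e3; exact (inferInstance : Mono ((truncι a' P).f ((ComplexShape.up ℤ).next i))))

lemma truncι_cyclesMap_epi (a' : ℤ) (P : CochainComplex (ModuleCat R) ℤ) :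
    Epi (HomologicalComplex.cyclesMap (truncι a' P) a') := by
  have e2 := truncι_isIso a' P (j := a') le_rfl
  have e3 := truncι_isIso a' P (j := a' + 1) (by omega)
  haveI := e2
  haveI := e3
  have hk : (P.iCycles a' ≫ inv ((truncι a' P).f a')) ≫ (trunc a' P).d a' (a' + 1) = 0 := by
    rw [← cancel_mono ((truncι a' P).f (a' + 1))]
    simp only [Category.assoc, ← (truncι a' P).comm, IsIso.inv_hom_id_assoc,
      HomologicalComplex.iCycles_d, Limits.zero_comp, Limits.comp_zero]
  let l : P.cycles a' ⟶ (trunc a' P).cycles a' :=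
    (trunc a' P).liftCycles (P.iCycles a' ≫ inv ((truncι a' P).f a')) (a' + 1)
      (by simp [CochainComplex.next]) hk
  have hfac : l ≫ HomologicalComplex.cyclesMap (truncι a' P) a' = 𝟙 _ := by
    rw [← cancel_mono (P.iCycles a')]
    simp [l, HomologicalComplex.cyclesMap_i, HomologicalComplex.liftCycles_i]
  exact epi_of_epi_fac hfac

lemma truncι_homologyMap_epi (a' : ℤ) (P : CochainComplex (ModuleCat R) ℤ) :
    Epi (HomologicalComplex.homologyMap (truncι a' P) a') :=
  ShortComplex.epi_homologyMap_of_epi_cyclesMap' _ (truncι_cyclesMap_epi a' P)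

lemma isPiIsomorphism_comp_of_isIso (π : R) {M N K : ModuleCat R} (e : M ⟶ N) [IsIso e]
    {h : N ⟶ K} (hh : IsPiIsomorphism π h) : IsPiIsomorphism π (e ≫ h) := by
  obtain ⟨h1, h2⟩ := hh
  have hbij : Function.Bijective e := ConcreteCategory.bijective_of_isIso e
  constructor
  · intro x hx
    have hex : h (e x) = 0 := hx
    have : π • (e x) = 0 := h1 (e x) hex
    have h0 : e (π • x) = e 0 := by rw [map_smul, map_zero]; exact this
    simpa using hbij.injective h0
  · intro y
    obtain ⟨n, hn⟩ := h2 y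
    obtain ⟨x, hx⟩ := hbij.surjective n
    refine ⟨x, ?_⟩
    show π • y = h (e x)
    rw [hx, ← hn]

end Trunc

end PseudoCoherence

/-- **Lemma 4.2.** For integers `a' ≥ a` and `b' ≥ b` with `a' ≤ b'`, a
`π`-`[a,b]`-pseudo-coherent complex of `R`-modules is also `π`-`[a',b']`-pseudo-coherent. -/
theorem isPiPseudoCoherent_translation {R : Type*} [CommRing R] (π : R)
    (a b a' b' : ℤ) (hab : a ≤ b) (ha'b' : a' ≤ b') (ha : a ≤ a') (hb : b ≤ b')
    (M : CochainComplex (ModuleCat R) ℤ) (hM : IsPiPseudoCoherent π a b M) :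
    IsPiPseudoCoherent π a' b' M := by
  obtain ⟨hvan, P, f, hfree, hfin, hsupp, hiso, hsurj⟩ := hM
  refine ⟨fun i hi x => hvan i (by omega) x, trunc a' P, truncι a' P ≫ f, ?_, ?_, ?_, ?_, ?_⟩
  · intro i
    show Module.Free R ↥(truncSub a' P i)
    by_cases h : a' ≤ i
    · rw [show truncSub a' P i = ⊤ by simp [truncSub, h]]
      haveI := hfree i
      exact Module.Free.of_equiv (Submodule.topEquiv (R := R) (M := P.X i)).symm
    · rw [show truncSub a' P i = ⊥ by simp [truncSub, h]]
      infer_instance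
  · intro i
    show Module.Finite R ↥(truncSub a' P i)
    by_cases h : a' ≤ i
    · rw [show truncSub a' P i = ⊤ by simp [truncSub, h]]
      haveI := hfin i
      exact Module.Finite.equiv (Submodule.topEquiv (R := R) (M := P.X i)).symm
    · rw [show truncSub a' P i = ⊥ by simp [truncSub, h]]
      infer_instance
  · rintro i (h | h) x
    · refine Subtype.ext ?_
      have hx : x.1 ∈ truncSub a' P i := x.2
      simp only [truncSub, if_neg (show ¬ a' ≤ i by omega), Submodule.mem_bot] at hx
      exact hx
    · exact Subtype.ext (hsupp i (Or.inr (by omega)) x.1)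
  · intro i hi
    rw [HomologicalComplex.homologyMap_comp]
    haveI := truncι_homologyMap_isIso a' P hi
    exact isPiIsomorphism_comp_of_isIso π _ (hiso i (by omega))
  · have hfs : IsPiSurjective π (HomologicalComplex.homologyMap f a') := by
      rcases eq_or_lt_of_le ha with h | h
      · subst h; exact hsurj
      · exact (hiso a' h).2
    have hepi := truncι_homologyMap_epi a' P
    have hsurjι := (ModuleCat.epi_iff_surjective
      (HomologicalComplex.homologyMap (truncι a' P) a')).1 hepi
    intro y
    obtain ⟨z, hz⟩ := hfs y
    obtain ⟨x, hx⟩ := hsurjι z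
    refine ⟨x, ?_⟩
    rw [HomologicalComplex.homologyMap_comp]
    show π • y = (HomologicalComplex.homologyMap f a')
      ((HomologicalComplex.homologyMap (truncι a' P) a') x)
    rw [hx, ← hz]
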